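/- arXiv:1511.00756 — 9 statements merged into one kernel-verified Lean document; each statement's English description precedes it below -/
import Mathlib

section
/- The function G(v,y) = (√(y²−4v) − y)/v is a first integral of the eigenvector field r₁: at every point (v,y) with v ≠ 0 and y² > 4v, the gradient of G is orthogonal to r₁(v,y) = (2v, y − √(y²−4v)), i.e. 2v·∂G/∂v + (y − √(y²−4v))·∂G/∂y = 0. Consequently G is constant along integral curves of r₁, so the 1-rarefaction curve through a point (v_L, y_L) with v_L ≠ 0, y_L² > 4v_L is given by the relation √(y²−4v) − y = (v/v_L)(√(y_L²−4v_L) − y_L). -/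
/-- The first integral of the eigenvector field r₁: G(v,y) = (√(y²−4v) − y)/v. -/
noncomputable def Gfun (v y : ℝ) : ℝ := (Real.sqrt (y ^ 2 - 4 * v) - y) / v

lemma hasDerivAt_G_v (v y : ℝ) (hv0 : v ≠ 0) (h : y ^ 2 > 4 * v) :
    HasDerivAt (fun s => Gfun s y)
      (((-2 / Real.sqrt (y ^ 2 - 4 * v)) * v - (Real.sqrt (y ^ 2 - 4 * v) - y)) / v ^ 2) v := by
  have hpos : 0 < y ^ 2 - 4 * v := by linarith
  have h1 : HasDerivAt (fun s : ℝ => y ^ 2 - 4 * s) (-4) v := by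
    simpa using (hasDerivAt_const v (y ^ 2)).fun_sub ((hasDerivAt_id' v).const_mul 4)
  have h2 : HasDerivAt (fun s => Real.sqrt (y ^ 2 - 4 * s))
      (-2 / Real.sqrt (y ^ 2 - 4 * v)) v := by
    have := (Real.hasDerivAt_sqrt (ne_of_gt hpos)).comp v h1
    refine this.congr_deriv ?_
    rw [div_mul_eq_mul_div]
    ring_nf
  have h3 : HasDerivAt (fun s => Real.sqrt (y ^ 2 - 4 * s) - y)
      (-2 / Real.sqrt (y ^ 2 - 4 * v)) v := by
    simpa using h2.sub_const y
  have := h3.fun_div (hasDerivAt_id' v) hv0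
  simpa [Gfun] using this

lemma hasDerivAt_G_y (v y : ℝ) (hv0 : v ≠ 0) (h : y ^ 2 > 4 * v) :
    HasDerivAt (fun s => Gfun v s)
      ((y / Real.sqrt (y ^ 2 - 4 * v) - 1) / v) y := by
  have hpos : 0 < y ^ 2 - 4 * v := by linarith
  have h1 : HasDerivAt (fun s : ℝ => s ^ 2 - 4 * v) (2 * y) y := by
    simpa using (hasDerivAt_pow 2 y).sub_const (4 * v)
  have h2 : HasDerivAt (fun s : ℝ => Real.sqrt (s ^ 2 - 4 * v))
      (y / Real.sqrt (y ^ 2 - 4 * v)) y := by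
    have := (Real.hasDerivAt_sqrt (ne_of_gt hpos)).comp y h1
    refine this.congr_deriv ?_
    rw [div_mul_eq_mul_div]
    ring_nf
  have h3 : HasDerivAt (fun s : ℝ => Real.sqrt (s ^ 2 - 4 * v) - s)
      (y / Real.sqrt (y ^ 2 - 4 * v) - 1) y := h2.sub (hasDerivAt_id y)
  have := h3.div_const v
  simpa [Gfun] using this

theorem stmt3 :
    (∀ v y : ℝ, v ≠ 0 → y ^ 2 > 4 * v →
      2 * v * deriv (fun s => Gfun s y) v +
        (y - Real.sqrt (y ^ 2 - 4 * v)) * deriv (fun s => Gfun v s) y = 0) ∧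
    (∀ (a b vL yL : ℝ) (V Y : ℝ → ℝ),
      vL ≠ 0 → yL ^ 2 > 4 * vL →
      (∀ t ∈ Set.Ioo a b, V t ≠ 0 ∧ (Y t) ^ 2 > 4 * V t) →
      (∀ t ∈ Set.Ioo a b, HasDerivAt V (2 * V t) t) →
      (∀ t ∈ Set.Ioo a b, HasDerivAt Y (Y t - Real.sqrt ((Y t) ^ 2 - 4 * V t)) t) →
      ∀ t0 ∈ Set.Ioo a b, V t0 = vL → Y t0 = yL →
        ∀ t ∈ Set.Ioo a b,
          Real.sqrt ((Y t) ^ 2 - 4 * V t) - Y t =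
            (V t / vL) * (Real.sqrt (yL ^ 2 - 4 * vL) - yL)) := by
  constructor
  · intro v y hv0 h
    have hpos : 0 < y ^ 2 - 4 * v := by linarith
    have hq : Real.sqrt (y ^ 2 - 4 * v) ≠ 0 := ne_of_gt (Real.sqrt_pos.mpr hpos)
    have hqq : Real.sqrt (y ^ 2 - 4 * v) ^ 2 = y ^ 2 - 4 * v := Real.sq_sqrt hpos.le
    rw [(hasDerivAt_G_v v y hv0 h).deriv, (hasDerivAt_G_y v y hv0 h).deriv]
    generalize Real.sqrt (y ^ 2 - 4 * v) = q at hq hqq ⊢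
    field_simp
    linear_combination (-1) * hqq
  · intro a b vL yL V Y hvL hyL hdom hV hY t0 ht0 hVt0 hYt0 t ht
    -- ψ t = (sqrt ((Y t)^2 - 4 V t) - Y t) / V t has derivative 0 on Ioo a b
    set ψ : ℝ → ℝ := fun t => (Real.sqrt ((Y t) ^ 2 - 4 * V t) - Y t) / V t with hψ
    have hderiv : ∀ s ∈ Set.Ioo a b, HasDerivAt ψ 0 s := by
      intro s hs
      obtain ⟨hVs, hYs⟩ := hdom s hs
      have hpos : 0 < (Y s) ^ 2 - 4 * V s := by linarith
      have hq0 : Real.sqrt ((Y s) ^ 2 - 4 * V s) ≠ 0 := ne_of_gt (Real.sqrt_pos.mpr hpos)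
      have hqq : Real.sqrt ((Y s) ^ 2 - 4 * V s) ^ 2 = (Y s) ^ 2 - 4 * V s :=
        Real.sq_sqrt hpos.le
      have h1 : HasDerivAt (fun t => (Y t) ^ 2 - 4 * V t)
          (2 * Y s * (Y s - Real.sqrt ((Y s) ^ 2 - 4 * V s)) - 4 * (2 * V s)) s := by
        have hY2 : HasDerivAt (fun t => (Y t) ^ 2)
            (2 * Y s * (Y s - Real.sqrt ((Y s) ^ 2 - 4 * V s))) s := by
          have := (hY s hs).fun_pow 2
          simpa [mul_comm, mul_assoc, mul_left_comm] using this
        exact hY2.sub ((hV s hs).const_mul 4)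
      have h2 : HasDerivAt (fun t => Real.sqrt ((Y t) ^ 2 - 4 * V t))
          ((2 * Y s * (Y s - Real.sqrt ((Y s) ^ 2 - 4 * V s)) - 4 * (2 * V s)) /
            (2 * Real.sqrt ((Y s) ^ 2 - 4 * V s))) s := by
        have := (Real.hasDerivAt_sqrt (ne_of_gt hpos)).comp s h1
        refine this.congr_deriv ?_
        field_simp
      have h3 : HasDerivAt (fun t => Real.sqrt ((Y t) ^ 2 - 4 * V t) - Y t)
          ((2 * Y s * (Y s - Real.sqrt ((Y s) ^ 2 - 4 * V s)) - 4 * (2 * V s)) /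
            (2 * Real.sqrt ((Y s) ^ 2 - 4 * V s)) -
            (Y s - Real.sqrt ((Y s) ^ 2 - 4 * V s))) s := h2.sub (hY s hs)
      have h4 := h3.fun_div (hV s hs) hVs
      refine h4.congr_deriv ?_
      field_simp
      linear_combination (-1) * hqq
    -- ψ is constant on Ioo a b
    have hconst : ψ t = ψ t0 := by
      have := Convex.norm_image_sub_le_of_norm_hasDerivWithin_le
        (f := ψ) (f' := fun _ => (0 : ℝ)) (C := 0) (s := Set.Ioo a b)
        (fun x hx => (hderiv x hx).hasDerivWithinAt)
        (fun x _ => by simp) (convex_Ioo a b) ht0 ht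
      have h0 : |ψ t - ψ t0| ≤ 0 := by simpa using this
      have := abs_nonpos_iff.mp h0
      linarith
    obtain ⟨hVt, hYt⟩ := hdom t ht
    have hψt0 : ψ t0 = (Real.sqrt (yL ^ 2 - 4 * vL) - yL) / vL := by
      simp [hψ, hVt0, hYt0]
    have : (Real.sqrt ((Y t) ^ 2 - 4 * V t) - Y t) / V t =
        (Real.sqrt (yL ^ 2 - 4 * vL) - yL) / vL := by
      rw [← hψt0]; exact hconst
    field_simp at this
    field_simp
    linarith [this]
end

section
/- Let v_L > 0, y_L < 0, y_L² > 4v_L, and set R_L = √(y_L²−4v_L), y_G = −4v_L/(R_L − y_L), v_G = y_G²/4. Then the point U_G = (v_G, y_G) satisfies: (i) y_G² = 4v_G (U_G lies on the parabola y² = 4v); (ii) √(y_G²−4v_G) − y_G = (v_G/v_L)(R_L − y_L) (U_G lies on the 1-rarefaction curve R₁ through (v_L, y_L)); and (iii) the eigenvector r₁(U_G) = (2v_G, y_G) is parallel to the tangent vector (y_G/2, 1) of the parabola v = y²/4 at U_G, so the curve R₁ meets the parabola y² = 4v tangentially at U_G. -/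
theorem stmt5 (vL yL RL yG vG : ℝ)
    (hvL : 0 < vL) (hyL : yL < 0) (hL : yL ^ 2 > 4 * vL)
    (hRL : RL = Real.sqrt (yL ^ 2 - 4 * vL))
    (hyG : yG = -4 * vL / (RL - yL)) (hvG : vG = yG ^ 2 / 4) :
    yG ^ 2 = 4 * vG ∧
    Real.sqrt (yG ^ 2 - 4 * vG) - yG = (vG / vL) * (RL - yL) ∧
    ∃ c : ℝ, 2 * vG = c * (yG / 2) ∧ yG = c * 1 := by
  have hRL0 : 0 ≤ RL := hRL ▸ Real.sqrt_nonneg _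
  have hden : 0 < RL - yL := by linarith
  have hkey : yG * (RL - yL) = -4 * vL := by
    rw [hyG]; field_simp
  refine ⟨by rw [hvG]; ring, ?_, yG, by rw [hvG]; ring, by ring⟩
  have h0 : yG ^ 2 - 4 * vG = 0 := by rw [hvG]; ring
  rw [h0, Real.sqrt_zero, zero_sub, hvG]
  field_simp
  nlinarith [hkey]
end

section
/- Let v_L > 0, y_L² ≥ 4v_L, and let (v, y) with v > 0 and (v, y) ≠ (v_L, y_L). If there exists s ∈ ℝ satisfying the Rankine–Hugoniot conditions s(v − v_L) = y/v − y_L/v_L and s(y − y_L) = 1/v − 1/v_L, then v ≠ v_L and y = v·y_L/(2v_L) + y_L/2 + σ·(v − v_L)·√(y_L²−4v_L)/(2v_L) for some σ ∈ {+1, −1}; that is, (v, y) lies on one of the two shock curves S₁ (σ = −1) or S₂ (σ = +1) through (v_L, y_L). -/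
theorem stmt6 (vL yL v y s : ℝ)
    (hvL : 0 < vL) (hL : yL ^ 2 ≥ 4 * vL)
    (hv : 0 < v) (hne : (v, y) ≠ (vL, yL))
    (hRH1 : s * (v - vL) = y / v - yL / vL)
    (hRH2 : s * (y - yL) = 1 / v - 1 / vL) :
    v ≠ vL ∧
    ∃ σ : ℝ, (σ = 1 ∨ σ = -1) ∧
      y = v * yL / (2 * vL) + yL / 2 +
        σ * (v - vL) * Real.sqrt (yL ^ 2 - 4 * vL) / (2 * vL) := by
  have hv0 : v ≠ 0 := ne_of_gt hv
  have hvL0 : vL ≠ 0 := ne_of_gt hvL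
  have hvne : v ≠ vL := by
    intro h
    subst h
    simp at hRH1
    have : y / v - yL / v = 0 := by simpa using hRH1.symm
    have hy : y = yL := by
      field_simp at this
      linarith
    exact hne (by simp [hy])
  refine ⟨hvne, ?_⟩
  have hw : v - vL ≠ 0 := sub_ne_zero.mpr hvne
  have h3 : (y / v - yL / vL) * (y - yL) = (1 / v - 1 / vL) * (v - vL) := by
    rw [← hRH1, ← hRH2]; ring
  have key : vL * (y - yL) ^ 2 - yL * (v - vL) * (y - yL) + (v - vL) ^ 2 = 0 := by
    field_simp at h3
    nlinarith [h3, sq_nonneg (v - vL), sq_nonneg (y - yL)]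
  set D := Real.sqrt (yL ^ 2 - 4 * vL) with hDdef
  clear_value D
  have hD : D ^ 2 = yL ^ 2 - 4 * vL := by rw [hDdef]; exact Real.sq_sqrt (by linarith)
  have hfact : (2 * vL * (y - yL) - yL * (v - vL) - (v - vL) * D) *
      (2 * vL * (y - yL) - yL * (v - vL) + (v - vL) * D) = 0 := by
    have : (2 * vL * (y - yL) - yL * (v - vL)) ^ 2 = ((v - vL) * D) ^ 2 := by
      have : ((v - vL) * D) ^ 2 = (v - vL) ^ 2 * (yL ^ 2 - 4 * vL) := by
        rw [mul_pow, hD]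
      nlinarith [key, this]
    nlinarith [this]
  rcases mul_eq_zero.mp hfact with h | h
  · refine ⟨1, Or.inl rfl, ?_⟩
    have h2 : (2 * vL) ≠ 0 := by positivity
    field_simp
    linear_combination h
  · refine ⟨-1, Or.inr rfl, ?_⟩
    have h2 : (2 * vL) ≠ 0 := by positivity
    field_simp
    linear_combination h
end

section
/- Let v_L > 0, v > 0, v ≠ v_L, y_L² ≥ 4v_L, and R_L = √(y_L²−4v_L). If y = v(y_L − R_L)/(2v_L) + (y_L + R_L)/2 (the 1-shock curve S₁ through (v_L, y_L)), then with s₁ = (−y_L − R_L)/(2v·v_L) both Rankine–Hugoniot conditions hold: s₁(v − v_L) = y/v − y_L/v_L and s₁(y − y_L) = 1/v − 1/v_L. Likewise, if y = v(y_L + R_L)/(2v_L) + (y_L − R_L)/2 (the 2-shock curve S₂), then with s₂ = (−y_L + R_L)/(2v·v_L) both Rankine–Hugoniot conditions hold. -/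
theorem stmt7 (vL yL v RL : ℝ)
    (hvL : 0 < vL) (hv : 0 < v) (hne : v ≠ vL) (hL : yL ^ 2 ≥ 4 * vL)
    (hRL : RL = Real.sqrt (yL ^ 2 - 4 * vL)) :
    (∀ y : ℝ, y = v * (yL - RL) / (2 * vL) + (yL + RL) / 2 →
      ((-yL - RL) / (2 * v * vL)) * (v - vL) = y / v - yL / vL ∧
      ((-yL - RL) / (2 * v * vL)) * (y - yL) = 1 / v - 1 / vL) ∧
    (∀ y : ℝ, y = v * (yL + RL) / (2 * vL) + (yL - RL) / 2 →
      ((-yL + RL) / (2 * v * vL)) * (v - vL) = y / v - yL / vL ∧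
      ((-yL + RL) / (2 * v * vL)) * (y - yL) = 1 / v - 1 / vL) := by
  have hR2 : RL ^ 2 = yL ^ 2 - 4 * vL := by
    rw [hRL, Real.sq_sqrt (by linarith)]
  have hv0 : v ≠ 0 := ne_of_gt hv
  have hvL0 : vL ≠ 0 := ne_of_gt hvL
  refine ⟨fun y hy => ⟨?_, ?_⟩, fun y hy => ⟨?_, ?_⟩⟩ <;> subst hy <;>
    field_simp <;> ring_nf <;>
    first
      | linear_combination (2 * (v - vL) * v * vL) * hR2
      | linear_combination (v - vL) * hR2
end

section
/- Let v_L > 0, y_L < 0, y_L² > 4v_L, R_L = √(y_L²−4v_L), and set y_D = y_L − R_L, v_D = (y_L − R_L)²/4, U_D = (v_D, y_D). Then: (i) y_D² = 4v_D (U_D lies on the parabola y² = 4v); (ii) y_D = v_D(y_L + R_L)/(2v_L) + (y_L − R_L)/2, i.e. U_D lies on the 2-shock curve S₂ through (v_L, y_L); (iii) √(y_D²−4v_D) − y_D = R_L − y_L, i.e. U_D lies on the 2-rarefaction curve R₂ through (v_L, y_L); and (iv) the slope (y_L + R_L)/(2v_L) of the line S₂ equals the slope 2/y_D of the parabola v =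 y²/4 at U_D, so S₂ is tangent to the parabola y² = 4v at U_D. -/
theorem stmt10 (vL yL RL yD vD : ℝ)
    (hvL : 0 < vL) (hyL : yL < 0) (hL : yL ^ 2 > 4 * vL)
    (hRL : RL = Real.sqrt (yL ^ 2 - 4 * vL))
    (hyD : yD = yL - RL) (hvD : vD = (yL - RL) ^ 2 / 4) :
    yD ^ 2 = 4 * vD ∧
    yD = vD * (yL + RL) / (2 * vL) + (yL - RL) / 2 ∧
    Real.sqrt (yD ^ 2 - 4 * vD) - yD = RL - yL ∧
    (yL + RL) / (2 * vL) = 2 / yD := by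
  have hR2 : RL ^ 2 = yL ^ 2 - 4 * vL := by
    rw [hRL, Real.sq_sqrt (by linarith)]
  have hR0 : 0 ≤ RL := hRL ▸ Real.sqrt_nonneg _
  have hRlt : RL < -yL := by
    nlinarith [sq_nonneg (RL + yL)]
  have hyD0 : yD < 0 := by rw [hyD]; linarith
  have h1 : yD ^ 2 = 4 * vD := by rw [hyD, hvD]; ring
  have h4 : (yL + RL) * yD = 4 * vL := by rw [hyD]; nlinarith
  refine ⟨h1, ?_, ?_, ?_⟩
  · rw [hvD, hyD]
    field_simp
    nlinarith
  · rw [h1]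
    simp [Real.sqrt_eq_zero', hyD]
  · rw [div_eq_div_iff (by linarith) (by linarith)]
    linarith [h4]
end

section
/- Let v : ℝ × (0,∞) → (0,∞) be continuously differentiable and satisfy the scalar conservation law ∂_t v − ∂_x(2/√v) = 0. Then the pair (v, y) with y := −2√v (so that y² = 4v and y < 0) is a classical solution of the full system: ∂_t v + ∂_x(y/v) = 0 and ∂_t y + ∂_x(1/v) = 0. In particular the curve y² = 4v is an invariant curve of the system. -/
theorem stmt11 (v : ℝ → ℝ → ℝ)
    -- v = v(x, t) is positive and continuously differentiable on ℝ × (0,∞)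
    (hpos : ∀ x t : ℝ, 0 < t → 0 < v x t)
    (hC1 : ContDiffOn ℝ 1 (fun p : ℝ × ℝ => v p.1 p.2) (Set.univ ×ˢ Set.Ioi 0))
    (hdiffx : ∀ x t : ℝ, 0 < t → DifferentiableAt ℝ (fun z => v z t) x)
    -- the scalar conservation law  ∂_t v − ∂_x (2/√v) = 0
    (hlaw : ∀ x t : ℝ, 0 < t →
      HasDerivAt (fun s => v x s) (deriv (fun z => 2 / Real.sqrt (v z t)) x) t) :
    -- then (v, y) with y = −2√v is a classical solution of the full system:
    -- ∂_t v + ∂_x (y/v) = 0  and  ∂_t y + ∂_x (1/v) = 0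
    ∀ x t : ℝ, 0 < t →
      HasDerivAt (fun s => v x s)
        (-(deriv (fun z => (-2 * Real.sqrt (v z t)) / v z t) x)) t ∧
      HasDerivAt (fun s => -2 * Real.sqrt (v x s))
        (-(deriv (fun z => 1 / v z t) x)) t := by
  intro x t ht
  have hV : 0 < v x t := hpos x t ht
  have hsV : Real.sqrt (v x t) ≠ 0 := by positivity
  have hss : Real.sqrt (v x t) * Real.sqrt (v x t) = v x t := Real.mul_self_sqrt hV.le
  set d := deriv (fun z => v z t) x with hd
  have hdx : HasDerivAt (fun z => v z t) d x := (hdiffx x t ht).hasDerivAt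
  have hsqrt : HasDerivAt (fun z => Real.sqrt (v z t))
      (1 / (2 * Real.sqrt (v x t)) * d) x :=
    (Real.hasDerivAt_sqrt hV.ne').comp x hdx
  have h2over : HasDerivAt (fun z => 2 / Real.sqrt (v z t))
      ((0 * Real.sqrt (v x t) - 2 * (1 / (2 * Real.sqrt (v x t)) * d)) /
        (Real.sqrt (v x t)) ^ 2) x :=
    (hasDerivAt_const x (2 : ℝ)).div hsqrt hsV
  have hinv : HasDerivAt (fun z => 1 / v z t)
      ((0 * v x t - 1 * d) / (v x t) ^ 2) x :=
    (hasDerivAt_const x (1 : ℝ)).div hdx hV.ne'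
  have hfeq : (fun z => (-2 * Real.sqrt (v z t)) / v z t)
      = fun z => -(2 / Real.sqrt (v z t)) := by
    funext z
    have hz : 0 < v z t := hpos z t ht
    have hsz : Real.sqrt (v z t) ≠ 0 := by positivity
    have hsz2 : Real.sqrt (v z t) * Real.sqrt (v z t) = v z t := Real.mul_self_sqrt hz.le
    have hsz2' : Real.sqrt (v z t) ^ 2 = v z t := Real.sq_sqrt hz.le
    field_simp
    linarith [hsz2']
  constructor
  · rw [hfeq, deriv.fun_neg, neg_neg]
    exact hlaw x t ht
  · have hvt : HasDerivAt (fun s => v x s)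
        ((0 * Real.sqrt (v x t) - 2 * (1 / (2 * Real.sqrt (v x t)) * d)) /
          (Real.sqrt (v x t)) ^ 2) t := by
      have := hlaw x t ht
      rwa [h2over.deriv] at this
    have hty : HasDerivAt (fun s => -2 * Real.sqrt (v x s))
        (-2 * (1 / (2 * Real.sqrt (v x t)) *
          ((0 * Real.sqrt (v x t) - 2 * (1 / (2 * Real.sqrt (v x t)) * d)) /
            (Real.sqrt (v x t)) ^ 2))) t :=
      (((Real.hasDerivAt_sqrt hV.ne').comp t hvt).const_mul (-2))
    have : -2 * (1 / (2 * Real.sqrt (v x t)) *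
          ((0 * Real.sqrt (v x t) - 2 * (1 / (2 * Real.sqrt (v x t)) * d)) /
            (Real.sqrt (v x t)) ^ 2))
        = -(deriv (fun z => 1 / v z t) x) := by
      rw [hinv.deriv]
      have hss2 : Real.sqrt (v x t) ^ 2 = v x t := Real.sq_sqrt hV.le
      field_simp
      linear_combination (-d * (v x t + Real.sqrt (v x t) ^ 2)) * hss2
    rwa [this] at hty
end

section
/- The curve {(y₁, y₂) : y₁ > 0, y₂ = 2^{1/3}·y₁^{11/15}} is invariant for the planar vector field X(y₁, y₂) = ( (5/2)(y₁^{18/5}/y₂³ − 2y₁^{7/5}), (5/2)·y₁^{13/5}/y₂² − 4y₂·y₁^{2/5} ): at every point of the curve, X is tangent to the curve, i.e. whenever y₁ > 0 and y₂ = 2^{1/3}·y₁^{11/15} one has X₂(y₁, y₂) = (11/15)·2^{1/3}·y₁^{−4/15}·X₁(y₁, y₂). -/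
theorem stmt12 (y1 y2 : ℝ) (h1 : 0 < y1)
    (h2 : y2 = (2 : ℝ) ^ ((1 : ℝ) / 3) * y1 ^ ((11 : ℝ) / 15)) :
    (5 / 2) * y1 ^ ((13 : ℝ) / 5) / y2 ^ 2 - 4 * y2 * y1 ^ ((2 : ℝ) / 5) =
      (11 / 15) * (2 : ℝ) ^ ((1 : ℝ) / 3) * y1 ^ (-(4 : ℝ) / 15) *
        ((5 / 2) * (y1 ^ ((18 : ℝ) / 5) / y2 ^ 3 - 2 * y1 ^ ((7 : ℝ) / 5))) := by
  subst h2
  set a : ℝ := (2 : ℝ) ^ ((1 : ℝ) / 3) with ha_def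
  set b : ℝ := y1 ^ ((1 : ℝ) / 15) with hb_def
  have ha : 0 < a := Real.rpow_pos_of_pos (by norm_num) _
  have hb : 0 < b := Real.rpow_pos_of_pos h1 _
  have ha3 : a ^ 3 = 2 := by
    rw [ha_def, ← Real.rpow_natCast ((2:ℝ) ^ ((1:ℝ)/3)) 3, ← Real.rpow_mul (by norm_num)]
    norm_num
  have k : ∀ n : ℕ, y1 ^ ((n : ℝ) / 15) = b ^ n := by
    intro n
    rw [hb_def, ← Real.rpow_natCast (y1 ^ ((1:ℝ)/15)) n, ← Real.rpow_mul h1.le]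
    congr 1; ring
  have e13 : y1 ^ ((13 : ℝ) / 5) = b ^ 39 := by
    rw [show (13:ℝ)/5 = (39:ℕ)/15 by norm_num, k]
  have e11 : y1 ^ ((11 : ℝ) / 15) = b ^ 11 := by
    rw [show (11:ℝ)/15 = (11:ℕ)/15 by norm_num, k]
  have e2 : y1 ^ ((2 : ℝ) / 5) = b ^ 6 := by
    rw [show (2:ℝ)/5 = (6:ℕ)/15 by norm_num, k]
  have e18 : y1 ^ ((18 : ℝ) / 5) = b ^ 54 := by
    rw [show (18:ℝ)/5 = (54:ℕ)/15 by norm_num, k]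
  have e7 : y1 ^ ((7 : ℝ) / 5) = b ^ 21 := by
    rw [show (7:ℝ)/5 = (21:ℕ)/15 by norm_num, k]
  have e4 : y1 ^ (-(4 : ℝ) / 15) = (b ^ 4)⁻¹ := by
    rw [show -(4:ℝ)/15 = -((4:ℕ)/15 : ℝ) by norm_num, Real.rpow_neg h1.le, k]
  rw [e13, e11, e2, e18, e7, e4]
  have hane := ha.ne'
  have hbne := hb.ne'
  field_simp
  ring_nf
  linear_combination (-10) * ha3
end

section
/- The planar vector field X(y₁, y₂) = ( (5/2)(y₁^{18/5}/y₂³ − 2y₁^{7/5}), (5/2)·y₁^{13/5}/y₂² − 4y₂·y₁^{2/5} ) has no zero in the open quadrant: for all y₁ > 0 and y₂ > 0, X(y₁, y₂) ≠ (0, 0). Hence the origin is the unique equilibrium of the inner system on the closed quadrant. -/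
theorem stmt13 (y1 y2 : ℝ) (h1 : 0 < y1) (h2 : 0 < y2) :
    ((5 / 2) * (y1 ^ ((18 : ℝ) / 5) / y2 ^ 3 - 2 * y1 ^ ((7 : ℝ) / 5)),
     (5 / 2) * y1 ^ ((13 : ℝ) / 5) / y2 ^ 2 - 4 * y2 * y1 ^ ((2 : ℝ) / 5)) ≠
      ((0 : ℝ), (0 : ℝ)) := by
  intro h
  have hA := congrArg Prod.fst h
  have hB := congrArg Prod.snd h
  simp only at hA hB
  have hy2 : (0:ℝ) < y2 ^ 3 := by positivity
  have h18 : y1 ^ ((18 : ℝ) / 5) = y1 ^ ((7 : ℝ) / 5) * y1 ^ ((11 : ℝ) / 5) := by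
    rw [← Real.rpow_add h1]; norm_num
  have h13 : y1 ^ ((13 : ℝ) / 5) = y1 ^ ((2 : ℝ) / 5) * y1 ^ ((11 : ℝ) / 5) := by
    rw [← Real.rpow_add h1]; norm_num
  have hp7 : (0:ℝ) < y1 ^ ((7 : ℝ) / 5) := Real.rpow_pos_of_pos h1 _
  have hp2 : (0:ℝ) < y1 ^ ((2 : ℝ) / 5) := Real.rpow_pos_of_pos h1 _
  -- From first component: y1^{11/5} = 2 y2^3
  have e1 : y1 ^ ((11 : ℝ) / 5) = 2 * y2 ^ 3 := by
    have h0 : y1 ^ ((18 : ℝ) / 5) / y2 ^ 3 - 2 * y1 ^ ((7 : ℝ) / 5) = 0 := by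
      have : (5/2 : ℝ) ≠ 0 := by norm_num
      exact (mul_eq_zero.mp hA).resolve_left this
    have h0' : y1 ^ ((18 : ℝ) / 5) = 2 * y1 ^ ((7 : ℝ) / 5) * y2 ^ 3 := by
      field_simp at h0; linarith
    rw [h18] at h0'
    have := mul_left_cancel₀ (ne_of_gt hp7) (by linarith : y1 ^ ((7 : ℝ) / 5) * y1 ^ ((11 : ℝ) / 5) = y1 ^ ((7 : ℝ) / 5) * (2 * y2 ^ 3))
    exact this
  -- From second component: (5/2) y1^{11/5} = 4 y2^3
  have e2 : (5/2 : ℝ) * y1 ^ ((11 : ℝ) / 5) = 4 * y2 ^ 3 := by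
    have hy2' : (y2:ℝ) ^ 2 ≠ 0 := by positivity
    have h0' : (5/2 : ℝ) * y1 ^ ((13 : ℝ) / 5) = 4 * y2 * y1 ^ ((2 : ℝ) / 5) * y2 ^ 2 := by
      field_simp at hB; linarith
    rw [h13] at h0'
    have : y1 ^ ((2 : ℝ) / 5) * ((5/2 : ℝ) * y1 ^ ((11 : ℝ) / 5)) = y1 ^ ((2 : ℝ) / 5) * (4 * y2 ^ 3) := by ring_nf; ring_nf at h0'; linarith
    exact mul_left_cancel₀ (ne_of_gt hp2) this
  nlinarith [hy2, e1, e2]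
end

section
/- Define the vector field X on {(v, y, v₁, v₂, ξ) ∈ ℝ⁵ : v ≠ 0} by X(v, y, v₁, v₂, ξ) = ( v₁, v₂, v₂/v − y·v₁/v² − ξ·v₁, −v₁/v² − ξ·v₂, 0 ). At any point p = (v, y, 0, 0, ξ) with v ≠ 0 and y² ≥ 4v, the Jacobian matrix DX(p) has characteristic polynomial t³·(t − (λ₁(v,y) − ξ))·(t − (λ₂(v,y) − ξ)), where λ₁(v,y) = (−y − √(y²−4v))/(2v²) and λ₂(v,y) = (−y + √(y²−4v))/(2v²). In particular the eigenvalues of DX(p) are 0 with multiplicity 3, together with λ₁(v,y) − ξ and λ₂(v,y) − ξ. -/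
/-- The fast-time vector field of the Dafermos regularization at ε = 0,
in the variables (v, y, v₁, v₂, ξ). -/
noncomputable def Xfield (p : Fin 5 → ℝ) : Fin 5 → ℝ :=
  ![p 2, p 3,
    p 3 / p 0 - p 1 * p 2 / (p 0) ^ 2 - p 4 * p 2,
    -(p 2) / (p 0) ^ 2 - p 4 * p 3,
    0]

open Polynomial ContinuousLinearMap

lemma charpoly_aux (a b c d : ℝ) :
    Matrix.charpoly !![(0:ℝ),0,1,0,0; 0,0,0,1,0; 0,0,a,b,0; 0,0,c,d,0; 0,0,0,0,0] =
      X^3 * (X^2 - C (a+d) * X + C (a*d - b*c)) := by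
  rw [Matrix.charpoly]
  have e : (Matrix.charmatrix !![(0:ℝ),0,1,0,0; 0,0,0,1,0; 0,0,a,b,0; 0,0,c,d,0; 0,0,0,0,0]) =
      !![X,0,-C 1,0,0; 0,X,0,-C 1,0; 0,0,X - C a, -C b,0; 0,0,-C c,X - C d,0; 0,0,0,0,X] := by
    refine Matrix.ext fun i j => ?_
    fin_cases i <;> fin_cases j <;>
      simp [Matrix.charmatrix_apply_eq, Matrix.charmatrix_apply_ne, Matrix.vecHead,
        Matrix.vecTail]
  rw [e]
  simp [Matrix.det_succ_row_zero, Fin.sum_univ_succ, Matrix.submatrix, Fin.succAbove,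
    Matrix.vecHead, Matrix.vecTail]
  ring

set_option maxHeartbeats 1000000 in
theorem stmt16 (v y ξ : ℝ) (hv : v ≠ 0) (h : y ^ 2 ≥ 4 * v) :
    Matrix.charpoly
        (Matrix.of fun i j : Fin 5 =>
          fderiv ℝ (fun q => Xfield q i) (![v, y, 0, 0, ξ]) (Pi.single j 1)) =
      Polynomial.X ^ 3 *
        (Polynomial.X - Polynomial.C ((-y - Real.sqrt (y ^ 2 - 4 * v)) / (2 * v ^ 2) - ξ)) *
        (Polynomial.X - Polynomial.C ((-y + Real.sqrt (y ^ 2 - 4 * v)) / (2 * v ^ 2) - ξ)) := by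
  set p : Fin 5 → ℝ := ![v, y, 0, 0, ξ] with hp
  have hp0 := hasFDerivAt_apply (𝕜 := ℝ) (0 : Fin 5) p
  have hp1 := hasFDerivAt_apply (𝕜 := ℝ) (1 : Fin 5) p
  have hp2 := hasFDerivAt_apply (𝕜 := ℝ) (2 : Fin 5) p
  have hp3 := hasFDerivAt_apply (𝕜 := ℝ) (3 : Fin 5) p
  have hp4 := hasFDerivAt_apply (𝕜 := ℝ) (4 : Fin 5) p
  have hv0 : p 0 ≠ 0 := by simp [hp, hv]
  have hinv0 := (hasDerivAt_inv hv0).comp_hasFDerivAt p hp0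
  have hinvsq := ((hasDerivAt_pow 2 (p 0)).inv (pow_ne_zero 2 hv0)).comp_hasFDerivAt p hp0
  simp only [Function.comp_def] at hinv0 hinvsq
  have hL2 := ((hp3.mul hinv0).sub ((hp1.mul hp2).mul hinvsq)).sub (hp4.mul hp2)
  have hL3 := (hp2.neg.mul hinvsq).sub (hp4.mul hp3)
  have c0 : ((0:Fin 5):ℕ) = 0 := rfl
  have c1 : ((1:Fin 5):ℕ) = 1 := rfl
  have c2 : ((2:Fin 5):ℕ) = 2 := rfl
  have c3 : ((3:Fin 5):ℕ) = 3 := rfl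
  have c4 : ((4:Fin 5):ℕ) = 4 := rfl
  have hM : (Matrix.of fun i j : Fin 5 =>
        fderiv ℝ (fun q => Xfield q i) p (Pi.single j 1)) =
      !![(0:ℝ),0,1,0,0; 0,0,0,1,0; 0,0,-(y/v^2)-ξ, v⁻¹,0; 0,0,-(v^2)⁻¹,-ξ,0; 0,0,0,0,0] := by
    refine Matrix.ext fun i j => ?_
    simp only [Matrix.of_apply]
    fin_cases i
    · show fderiv ℝ (fun q : Fin 5 → ℝ => q 2) p (Pi.single j 1) = _
      rw [hp2.fderiv]
      simp only [hp, ContinuousLinearMap.proj_apply, Pi.single_apply]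
      fin_cases j <;> norm_num [Fin.ext_iff, c0, c1, c2, c3, c4, Matrix.vecHead, Matrix.vecTail]
    · show fderiv ℝ (fun q : Fin 5 → ℝ => q 3) p (Pi.single j 1) = _
      rw [hp3.fderiv]
      simp only [hp, ContinuousLinearMap.proj_apply, Pi.single_apply]
      fin_cases j <;> norm_num [Fin.ext_iff, c0, c1, c2, c3, c4, Matrix.vecHead, Matrix.vecTail]
    · show fderiv ℝ (fun q : Fin 5 → ℝ =>
          q 3 / q 0 - q 1 * q 2 / (q 0) ^ 2 - q 4 * q 2) p (Pi.single j 1) = _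
      simp only [div_eq_mul_inv]
      rw [HasFDerivAt.fderiv (f := fun q : Fin 5 → ℝ => q 3 * (q 0)⁻¹ - q 1 * q 2 * (q 0 ^ 2)⁻¹ - q 4 * q 2) hL2]
      simp only [hp, ContinuousLinearMap.sub_apply, ContinuousLinearMap.add_apply,
        ContinuousLinearMap.smul_apply, ContinuousLinearMap.proj_apply, smul_eq_mul,
        Matrix.cons_val_zero, Matrix.cons_val_one, Matrix.head_cons, Matrix.cons_val_two,
        Matrix.tail_cons, Matrix.cons_val_three, Matrix.cons_val_four, Pi.single_apply]
      fin_cases j <;> norm_num [Fin.ext_iff, c0, c1, c2, c3, c4, Matrix.vecHead, Matrix.vecTail, Matrix.cons_val] <;>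
        first
          | (simp only [Matrix.cons_val_two, Matrix.tail_cons, Matrix.head_cons]; simp)
          | decide
          | (intro hc; exact absurd hc (by decide))
          | (intro hc; exact absurd (by decide) hc)
          | (field_simp; ring)
          | ring
          | norm_num
    · show fderiv ℝ (fun q : Fin 5 → ℝ =>
          -(q 2) / (q 0) ^ 2 - q 4 * q 3) p (Pi.single j 1) = _
      simp only [div_eq_mul_inv]
      rw [HasFDerivAt.fderiv (f := fun q : Fin 5 → ℝ => -q 2 * (q 0 ^ 2)⁻¹ - q 4 * q 3) hL3]
      simp only [hp, ContinuousLinearMap.sub_apply, ContinuousLinearMap.add_apply,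
        ContinuousLinearMap.smul_apply, ContinuousLinearMap.neg_apply,
        ContinuousLinearMap.proj_apply, smul_eq_mul,
        Matrix.cons_val_zero, Matrix.cons_val_one, Matrix.head_cons, Matrix.cons_val_two,
        Matrix.tail_cons, Matrix.cons_val_three, Matrix.cons_val_four, Pi.single_apply]
      fin_cases j <;> norm_num [Fin.ext_iff, c0, c1, c2, c3, c4, Matrix.vecHead, Matrix.vecTail, Matrix.cons_val] <;>
        first
          | (simp only [Matrix.cons_val_two, Matrix.tail_cons, Matrix.head_cons]; simp)
          | decide
          | (intro hc; exact absurd hc (by decide))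
          | (intro hc; exact absurd (by decide) hc)
          | (field_simp; ring)
          | ring
          | norm_num
    · show fderiv ℝ (fun _ : Fin 5 → ℝ => (0:ℝ)) p (Pi.single j 1) = _
      rw [fderiv_fun_const]
      fin_cases j <;> simp [Matrix.vecHead, Matrix.vecTail]
  rw [hM, charpoly_aux]
  have hs : Real.sqrt (y^2 - 4*v) ^ 2 = y^2 - 4*v := Real.sq_sqrt (by linarith)
  set s := Real.sqrt (y^2 - 4*v) with hsd
  have h1 : (-(y/v^2)-ξ) + -ξ = ((-y - s) / (2 * v ^ 2) - ξ) + ((-y + s) / (2 * v ^ 2) - ξ) := by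
    field_simp
    ring
  have h2 : (-(y/v^2)-ξ) * -ξ - v⁻¹ * (-(v^2)⁻¹) =
      ((-y - s) / (2 * v ^ 2) - ξ) * ((-y + s) / (2 * v ^ 2) - ξ) := by
    field_simp
    linear_combination hs
  rw [h1, h2, map_add, map_mul]
  ring
end
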